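/- In a D-valued poset P, for all nonempty finite subsets X, Y of P, the equality ⟦X⊆Y⟧ = ⋁_{∅⊂Z⊆Y} ⟦X=Z⟧ holds, where the join runs over all nonempty subsets Z of Y and ⟦X=Z⟧ = ⟦X⊆Z⟧ ∧ ⟦Z⊆X⟧. -/

import Mathlib

open Finset

/-- The Boolean value `⟦x = y⟧ = ⟦x ≤ y⟧ ⊓ ⟦y ≤ x⟧` in a `D`-valued poset. -/
def eqv {D P : Type*} [DistribLattice D] (le : P → P → D) (x y : P) : D :=
  le x y ⊓ le y x

/-- The Boolean value `⟦x ∈ Z⟧ = ⋁_{z ∈ Z} ⟦x = z⟧` for a nonempty finite `Z`. -/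
def memv {D P : Type*} [DistribLattice D] (le : P → P → D) (x : P)
    (Z : Finset P) (hZ : Z.Nonempty) : D :=
  Z.sup' hZ (eqv le x)

/-- The Boolean value `⟦X ⊆ Y⟧ = ⋀_{x ∈ X} ⟦x ∈ Y⟧`. -/
def subv {D P : Type*} [DistribLattice D] (le : P → P → D)
    (X : Finset P) (hX : X.Nonempty) (Y : Finset P) (hY : Y.Nonempty) : D :=
  X.inf' hX fun x => memv le x Y hY

/-- The Boolean value `⟦X = Y⟧ = ⟦X ⊆ Y⟧ ⊓ ⟦Y ⊆ X⟧`. -/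
def setEqv {D P : Type*} [DistribLattice D] (le : P → P → D)
    (X : Finset P) (hX : X.Nonempty) (Y : Finset P) (hY : Y.Nonempty) : D :=
  subv le X hX Y hY ⊓ subv le Y hY X hX

section Aux

variable {D P : Type*} [DistribLattice D] (le : P → P → D)

lemma eqv_comm (x y : P) : eqv le x y = eqv le y x := inf_comm _ _

lemma memv_mono (x : P) {Z W : Finset P} (h : Z ⊆ W) (hZ : Z.Nonempty) :
    memv le x Z hZ ≤ memv le x W (hZ.mono h) :=
  Finset.sup'_mono _ h hZ

lemma subv_mono_right (X : Finset P) (hX : X.Nonempty) {Z W : Finset P}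
    (h : Z ⊆ W) (hZ : Z.Nonempty) :
    subv le X hX Z hZ ≤ subv le X hX W (hZ.mono h) :=
  Finset.le_inf' _ _ fun x hx => (Finset.inf'_le _ hx).trans (memv_mono le x h hZ)

lemma subv_anti_left {X X' : Finset P} (h : X ⊆ X') (hX : X.Nonempty)
    (hX' : X'.Nonempty) (Z : Finset P) (hZ : Z.Nonempty) :
    subv le X' hX' Z hZ ≤ subv le X hX Z hZ :=
  Finset.inf'_mono _ h hX

/-- The right-hand side sup, as an abbreviation. -/
noncomputable def rhsSup (X Y : Finset P) (hX : X.Nonempty) (hY : Y.Nonempty) : D :=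
  (Y.powerset.filter fun Z => Z.Nonempty).attach.sup'
    ⟨⟨Y, Finset.mem_filter.mpr ⟨Finset.mem_powerset.mpr (Finset.Subset.refl Y), hY⟩⟩,
      Finset.mem_attach _ _⟩
    (fun Z => setEqv le X hX Z.1 (Finset.mem_filter.mp Z.2).2)

lemma setEqv_le_rhsSup (X Y : Finset P) (hX : X.Nonempty) (hY : Y.Nonempty)
    {Z : Finset P} (hZY : Z ⊆ Y) (hZ : Z.Nonempty) :
    setEqv le X hX Z hZ ≤ rhsSup le X Y hX hY := by
  have hmem : Z ∈ Y.powerset.filter fun Z => Z.Nonempty :=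
    Finset.mem_filter.mpr ⟨Finset.mem_powerset.mpr hZY, hZ⟩
  exact Finset.le_sup'_of_le _ (Finset.mem_attach _ ⟨Z, hmem⟩) le_rfl

lemma subv_le_rhsSup (X Y : Finset P) (hX : X.Nonempty) (hY : Y.Nonempty) :
    subv le X hX Y hY ≤ rhsSup le X Y hX hY := by
  classical
  induction hX using Finset.Nonempty.cons_induction with
  | singleton a =>
      unfold subv
      rw [Finset.inf'_singleton]
      unfold memv
      apply Finset.sup'_le
      intro y hy
      have h1 : eqv le a y ≤ setEqv le {a} (Finset.singleton_nonempty a)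
          {y} (Finset.singleton_nonempty y) := by
        unfold setEqv subv memv
        simp only [Finset.inf'_singleton, Finset.sup'_singleton]
        rw [eqv_comm le y a]
        exact le_inf le_rfl le_rfl
      exact h1.trans (setEqv_le_rhsSup le _ _ _ hY
        (Finset.singleton_subset_iff.mpr hy) (Finset.singleton_nonempty y))
  | cons a X' ha hX' ih =>
      have hcons : subv le (Finset.cons a X' ha) (Finset.cons_nonempty ha) Y hY =
          memv le a Y hY ⊓ subv le X' hX' Y hY := by
        unfold subv
        exact Finset.inf'_cons (H := hX') (f := fun x => memv le x Y hY)
      rw [hcons]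
      calc memv le a Y hY ⊓ subv le X' hX' Y hY
          ≤ memv le a Y hY ⊓ rhsSup le X' Y hX' hY := inf_le_inf_left _ ih
        _ ≤ rhsSup le (Finset.cons a X' ha) Y (Finset.cons_nonempty ha) hY := by
            rw [rhsSup]
            refine le_trans (le_of_eq (Finset.sup'_inf_distrib_left _ _ _)) ?_
            apply Finset.sup'_le
            intro Z _
            obtain ⟨Z, hZmem⟩ := Z
            have hZY : Z ⊆ Y := Finset.mem_powerset.mp (Finset.mem_filter.mp hZmem).1
            have hZ : Z.Nonempty := (Finset.mem_filter.mp hZmem).2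
            simp only
            unfold memv
            rw [Finset.sup'_inf_distrib_right]
            apply Finset.sup'_le
            intro y hy
            -- goal: eqv le a y ⊓ setEqv le X' hX' Z hZ ≤ rhsSup le (cons a X') Y _ hY
            have hins : insert y Z ⊆ Y := Finset.insert_subset hy hZY
            have hinsne : (insert y Z).Nonempty := Finset.insert_nonempty y Z
            refine le_trans ?_ (setEqv_le_rhsSup le _ _ (Finset.cons_nonempty ha) hY
              hins hinsne)
            unfold setEqv
            apply le_inf
            · -- ⟦X ⊆ insert y Z⟧
              unfold subv
              apply Finset.le_inf'
              intro b hb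
              rcases Finset.mem_cons.mp hb with rfl | hb
              · refine le_trans inf_le_left ?_
                exact Finset.le_sup' _ (Finset.mem_insert_self y Z)
              · refine le_trans inf_le_right ?_
                refine le_trans ?_ (memv_mono le b (Finset.subset_insert y Z) hZ)
                refine le_trans inf_le_left ?_
                exact Finset.inf'_le _ hb
            · -- ⟦insert y Z ⊆ X⟧
              unfold subv
              apply Finset.le_inf'
              intro b hb
              rcases Finset.mem_insert.mp hb with rfl | hb
              · refine le_trans inf_le_left ?_
                rw [eqv_comm]
                exact Finset.le_sup' _ (Finset.mem_cons_self a X')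
              · refine le_trans inf_le_right ?_
                refine le_trans inf_le_right ?_
                refine le_trans (Finset.inf'_le _ hb) ?_
                exact memv_mono le b (Finset.subset_cons ha) hX'

end Aux

/-- in a `D`-valued poset,
`⟦X ⊆ Y⟧ = ⋁_{∅ ⊂ Z ⊆ Y} ⟦X = Z⟧`, the join running over all nonempty subsets `Z` of `Y`. -/
theorem subv_eq_sup_setEqv {D P : Type*} [DistribLattice D] [OrderTop D] [Nonempty P]
    (le : P → P → D)
    (le_refl : ∀ a, le a a = ⊤)
    (le_trans : ∀ a b c, le a b ⊓ le b c ≤ le a c)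
    (X Y : Finset P) (hX : X.Nonempty) (hY : Y.Nonempty) :
    subv le X hX Y hY =
      (Y.powerset.filter fun Z => Z.Nonempty).attach.sup'
        ⟨⟨Y, Finset.mem_filter.mpr ⟨Finset.mem_powerset.mpr (Finset.Subset.refl Y), hY⟩⟩,
          Finset.mem_attach _ _⟩
        (fun Z => setEqv le X hX Z.1 (Finset.mem_filter.mp Z.2).2) := by
  refine le_antisymm (subv_le_rhsSup le X Y hX hY) ?_
  apply Finset.sup'_le
  rintro ⟨Z, hZmem⟩ -
  have hZY : Z ⊆ Y := Finset.mem_powerset.mp (Finset.mem_filter.mp hZmem).1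
  have hZ : Z.Nonempty := (Finset.mem_filter.mp hZmem).2
  calc setEqv le X hX Z (Finset.mem_filter.mp hZmem).2
      ≤ subv le X hX Z hZ := inf_le_left
    _ ≤ subv le X hX Y (hZ.mono hZY) := subv_mono_right le X hX hZY hZ
    _ = subv le X hX Y hY := rfl
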